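/- Suppose a randomized mechanism M outputs a subset S of {1,…,n} by including each index i independently with probability e^{uᵢ(D)}/(e^{uᵢ(D)}+1), where for all neighboring datasets D, D' we have Σᵢ |uᵢ(D) − uᵢ(D')| ≤ Δ. Then for any subset S, P[M(D) = S] ≤ e^{2Δ} · P[M(D') = S]; i.e., M is 2Δ-differentially pure DP. -/

import Mathlib

open Real

lemma key_one_add (a b : ℝ) : 1 + exp b ≤ exp |a - b| * (1 + exp a) := by
  have h1 : (1:ℝ) ≤ exp |a - b| := by
    rw [← Real.exp_zero]
    exact exp_le_exp.mpr (abs_nonneg _)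
  have h2 : exp b ≤ exp |a - b| * exp a := by
    rw [← Real.exp_add]
    apply exp_le_exp.mpr
    have : b - a ≤ |a - b| := by rw [abs_sub_comm]; exact le_abs_self _
    linarith
  nlinarith [exp_pos a, exp_pos b]

lemma factor_bound (a b : ℝ) (c : Prop) [Decidable c] :
    (if c then exp a / (1 + exp a) else 1 - exp a / (1 + exp a))
      ≤ exp (2 * |a - b|) * (if c then exp b / (1 + exp b) else 1 - exp b / (1 + exp b)) := by
  have ha : (0:ℝ) < 1 + exp a := by positivity
  have hb : (0:ℝ) < 1 + exp b := by positivity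
  have hk : 1 + exp b ≤ exp |a - b| * (1 + exp a) := key_one_add a b
  have hk' : 1 + exp a ≤ exp |a - b| * (1 + exp b) := by
    rw [abs_sub_comm]; exact key_one_add b a
  have hab : exp a ≤ exp |a - b| * exp b := by
    rw [← Real.exp_add]
    apply exp_le_exp.mpr
    have : a - b ≤ |a - b| := le_abs_self _
    linarith
  have hsq : exp (2 * |a - b|) = exp |a - b| * exp |a - b| := by
    rw [← Real.exp_add]; ring_nf
  by_cases hc : c
  · simp only [hc, if_true]
    rw [← mul_div_assoc, div_le_div_iff₀ ha hb]
    have hm := mul_le_mul hab hk (by positivity) (by positivity)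
    rw [hsq]; ring_nf at hm ⊢; linarith
  · simp only [hc, if_false]
    have e1 : 1 - exp a / (1 + exp a) = 1 / (1 + exp a) := by field_simp; ring
    have e2 : 1 - exp b / (1 + exp b) = 1 / (1 + exp b) := by field_simp; ring
    rw [e1, e2, mul_one_div, div_le_div_iff₀ ha hb]
    have h1 : (1:ℝ) ≤ exp |a - b| := by
      rw [← Real.exp_zero]; exact exp_le_exp.mpr (abs_nonneg _)
    nlinarith [exp_pos a, exp_pos b]

lemma factor_nonneg (a : ℝ) (c : Prop) [Decidable c] :
    0 ≤ (if c then exp a / (1 + exp a) else 1 - exp a / (1 + exp a)) := by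
  have ha : (0:ℝ) < 1 + exp a := by positivity
  by_cases hc : c <;> simp only [hc, if_true, if_false]
  · positivity
  · have : exp a / (1 + exp a) ≤ 1 := by
      rw [div_le_one ha]; linarith
    linarith

/-- A mechanism that includes each index `i` independently with probability
`sigmoid (uᵢ(D)) = e^{uᵢ}/(1+e^{uᵢ})` is `2Δ`-differentially private whenever the
scores of neighboring datasets satisfy `∑ᵢ |uᵢ(D) − uᵢ(D')| ≤ Δ`. -/
theorem sigmoid_mechanism_dp {n : ℕ} (Δ : ℝ) (u u' : Fin n → ℝ)
    (h : ∑ i, |u i - u' i| ≤ Δ) (S : Finset (Fin n)) :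
    (∏ i, if i ∈ S then exp (u i) / (1 + exp (u i))
          else 1 - exp (u i) / (1 + exp (u i)))
      ≤ exp (2 * Δ) *
        ∏ i, if i ∈ S then exp (u' i) / (1 + exp (u' i))
             else 1 - exp (u' i) / (1 + exp (u' i)) := by
  calc (∏ i, if i ∈ S then exp (u i) / (1 + exp (u i))
          else 1 - exp (u i) / (1 + exp (u i)))
      ≤ ∏ i, exp (2 * |u i - u' i|) *
          (if i ∈ S then exp (u' i) / (1 + exp (u' i))
           else 1 - exp (u' i) / (1 + exp (u' i))) := by
        apply Finset.prod_le_prod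
        · intro i _; exact factor_nonneg (u i) _
        · intro i _; exact factor_bound (u i) (u' i) _
    _ = (∏ i, exp (2 * |u i - u' i|)) *
          ∏ i, (if i ∈ S then exp (u' i) / (1 + exp (u' i))
           else 1 - exp (u' i) / (1 + exp (u' i))) := Finset.prod_mul_distrib
    _ ≤ exp (2 * Δ) *
          ∏ i, (if i ∈ S then exp (u' i) / (1 + exp (u' i))
           else 1 - exp (u' i) / (1 + exp (u' i))) := by
        apply mul_le_mul_of_nonneg_right
        · rw [← Real.exp_sum]
          apply exp_le_exp.mpr
          rw [← Finset.mul_sum]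
          linarith
        · exact Finset.prod_nonneg fun i _ => factor_nonneg (u' i) _
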